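/- Asymptotic tightness of the informed receiver bound: for fixed T ≥ 1, ρ > 0 and a probability density f on (0,∞), define ν = ν(C) > 0 by the constraint ∫_{ν/ρ}^∞ log(ρλ/ν) f(λ) dλ = C/T, and R(C) = T ∫_{ν/ρ}^∞ [log(1+ρλ) − log(1+ν)] f(λ) dλ. Then R(C) ≤ C, and as C → ∞, ν(C) → 0 and R(C) → T ∫₀^∞ log(1+ρλ) f(λ) dλ (assuming this integral is finite). -/

import Mathlib

open Filter MeasureTheory

/-- Asymptotic tightness of the informed receiver bound.  For fixed `T ≥ 1`, `ρ > 0` and a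
probability density `f` on `(0,∞)` with `∫₀^∞ log₂(1+ρλ) f(λ) dλ < ∞`, let `ν(C) > 0` satisfy
the bottleneck constraint `∫_{ν(C)/ρ}^∞ log₂(ρλ/ν(C)) f(λ) dλ = C/T` for every `C > 0`, and let
`R(C) = T ∫_{ν(C)/ρ}^∞ [log₂(1+ρλ) − log₂(1+ν(C))] f(λ) dλ`.  Then `R(C) ≤ C` for all `C > 0`,
`ν(C) → 0` as `C → ∞`, and `R(C) → T ∫₀^∞ log₂(1+ρλ) f(λ) dλ` as `C → ∞`. -/
theorem informed_receiver_bound_asymptotics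
    (T ρ : ℝ) (hT : 1 ≤ T) (hρ : 0 < ρ)
    (f : ℝ → ℝ) (hf0 : ∀ x, 0 ≤ f x)
    (hf1 : ∫ x in Set.Ioi (0 : ℝ), f x = 1)
    (hfint : IntegrableOn (fun x => Real.logb 2 (1 + ρ * x) * f x) (Set.Ioi 0))
    (ν : ℝ → ℝ) (hν : ∀ C, 0 < C → 0 < ν C)
    (hcon : ∀ C, 0 < C →
      ∫ x in Set.Ioi (ν C / ρ), Real.logb 2 (ρ * x / ν C) * f x = C / T) :
    (∀ C, 0 < C →
        T * ∫ x in Set.Ioi (ν C / ρ),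
            (Real.logb 2 (1 + ρ * x) - Real.logb 2 (1 + ν C)) * f x ≤ C) ∧
    Tendsto ν atTop (nhds 0) ∧
    Tendsto (fun C =>
        T * ∫ x in Set.Ioi (ν C / ρ),
            (Real.logb 2 (1 + ρ * x) - Real.logb 2 (1 + ν C)) * f x)
      atTop (nhds (T * ∫ x in Set.Ioi (0 : ℝ), Real.logb 2 (1 + ρ * x) * f x)) := by
  have hT0 : (0:ℝ) < T := lt_of_lt_of_le one_pos hT
  have hfInt : IntegrableOn f (Set.Ioi 0) := by
    by_contra h
    rw [MeasureTheory.integral_undef h] at hf1; norm_num at hf1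
  -- pointwise inequality for part 1
  have hpt : ∀ C, 0 < C → ∀ x ∈ Set.Ioi (ν C / ρ),
      (Real.logb 2 (1 + ρ * x) - Real.logb 2 (1 + ν C)) * f x ≤
        Real.logb 2 (ρ * x / ν C) * f x := by
    intro C hC x hx
    have hν' := hν C hC
    have hx' : ν C / ρ < x := hx
    have hx0 : 0 < x := lt_trans (by positivity) hx'
    have hρx : ν C < ρ * x := (div_lt_iff₀ hρ).1 hx' |>.trans_eq (mul_comm x ρ)
    have h1 : (0:ℝ) < 1 + ρ * x := by positivity
    have h2 : (0:ℝ) < 1 + ν C := by positivity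
    apply mul_le_mul_of_nonneg_right _ (hf0 x)
    rw [← Real.logb_div (ne_of_gt h1) (ne_of_gt h2)]
    rw [Real.logb_le_logb one_lt_two (by positivity) (by positivity)]
    rw [div_le_div_iff₀ h2 hν']
    nlinarith
  have part1 : ∀ C, 0 < C →
      T * ∫ x in Set.Ioi (ν C / ρ),
          (Real.logb 2 (1 + ρ * x) - Real.logb 2 (1 + ν C)) * f x ≤ C := by
    intro C hC
    have hν' := hν C hC
    by_cases hg : IntegrableOn (fun x => Real.logb 2 (ρ * x / ν C) * f x)
        (Set.Ioi (ν C / ρ))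
    · have hmono : ∫ x in Set.Ioi (ν C / ρ),
          (Real.logb 2 (1 + ρ * x) - Real.logb 2 (1 + ν C)) * f x ≤
          ∫ x in Set.Ioi (ν C / ρ), Real.logb 2 (ρ * x / ν C) * f x := by
        apply integral_mono_of_nonneg _ hg
        · filter_upwards [ae_restrict_mem measurableSet_Ioi] with x hx
          exact hpt C hC x hx
        · filter_upwards [ae_restrict_mem measurableSet_Ioi] with x hx
          have hx0 : 0 < x := lt_trans (by positivity) hx
          have hρx : ν C < ρ * x := (div_lt_iff₀ hρ).1 hx |>.trans_eq (mul_comm x ρ)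
          have h2 : (0:ℝ) < 1 + ν C := by positivity
          apply mul_nonneg _ (hf0 x)
          rw [sub_nonneg, Real.logb_le_logb one_lt_two h2 (by positivity)]
          linarith
      rw [hcon C hC] at hmono
      calc T * ∫ x in Set.Ioi (ν C / ρ),
            (Real.logb 2 (1 + ρ * x) - Real.logb 2 (1 + ν C)) * f x
          ≤ T * (C / T) := by
            exact mul_le_mul_of_nonneg_left hmono (le_of_lt hT0)
        _ = C := by field_simp
    · exfalso
      have := hcon C hC
      rw [MeasureTheory.integral_undef hg] at this
      have : C / T = 0 := this.symm
      have hCT : 0 < C / T := div_pos hC hT0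
      linarith
  -- Part 2 : ν → 0
  have hνtend : Tendsto ν atTop (nhds 0) := by
    rw [Metric.tendsto_atTop]
    intro ε hε
    set ε' := min ε 1 with hε'def
    have hε'0 : 0 < ε' := lt_min hε one_pos
    have hε'1 : ε' ≤ 1 := min_le_right _ _
    set M : ℝ → ℝ := fun x => (Real.logb 2 (1/ε') + Real.logb 2 (1 + ρ * x)) * f x
      with hMdef
    have hlogε : 0 ≤ Real.logb 2 (1/ε') := by
      apply Real.logb_nonneg one_lt_two
      rw [le_div_iff₀ hε'0]; linarith
    have hMint : IntegrableOn M (Set.Ioi 0) := by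
      have h1 : IntegrableOn (fun x => Real.logb 2 (1/ε') * f x) (Set.Ioi 0) :=
        hfInt.const_mul _
      have h2 := h1.add hfint
      apply h2.congr
      filter_upwards with x
      simp only [hMdef, Pi.add_apply]; ring
    set K := ∫ x in Set.Ioi (0:ℝ), M x with hKdef
    refine ⟨max 1 (T * K) + 1, fun C hC => ?_⟩
    have hC0 : 0 < C := lt_of_lt_of_le (by positivity) hC
    have hν' := hν C hC0
    rw [Real.dist_eq, sub_zero, abs_of_pos hν']
    by_contra hge
    push_neg at hge
    have hgeε' : ε' ≤ ν C := le_trans (min_le_left _ _) hge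
    have hsub : Set.Ioi (ν C / ρ) ⊆ Set.Ioi (0:ℝ) :=
      Set.Ioi_subset_Ioi (by positivity)
    have hbound : C / T ≤ K := by
      rw [← hcon C hC0]
      have step1 : ∫ x in Set.Ioi (ν C / ρ), Real.logb 2 (ρ * x / ν C) * f x ≤
          ∫ x in Set.Ioi (ν C / ρ), M x := by
        apply integral_mono_of_nonneg _ (hMint.mono_set hsub)
        · filter_upwards [ae_restrict_mem measurableSet_Ioi] with x hx
          have hx0 : 0 < x := lt_trans (by positivity) hx
          have hρx : ν C < ρ * x := (div_lt_iff₀ hρ).1 hx |>.trans_eq (mul_comm x ρ)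
          apply mul_le_mul_of_nonneg_right _ (hf0 x)
          have e1 : Real.logb 2 (ρ * x / ν C) ≤ Real.logb 2 ((1 + ρ * x) / ε') := by
            rw [Real.logb_le_logb one_lt_two (by positivity) (by positivity)]
            rw [div_le_div_iff₀ hν' hε'0]
            nlinarith
          have e2 : Real.logb 2 ((1 + ρ * x) / ε') =
              Real.logb 2 (1/ε') + Real.logb 2 (1 + ρ * x) := by
            rw [Real.logb_div (by positivity) (ne_of_gt hε'0),
              Real.logb_div one_ne_zero (ne_of_gt hε'0), Real.logb_one]
            ring
          linarith [e1, e2.le]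
        · filter_upwards [ae_restrict_mem measurableSet_Ioi] with x hx
          have hx0 : 0 < x := lt_trans (by positivity) hx
          have hρx : ν C < ρ * x := (div_lt_iff₀ hρ).1 hx |>.trans_eq (mul_comm x ρ)
          show (0:ℝ) ≤ _
          apply mul_nonneg _ (hf0 x)
          apply Real.logb_nonneg one_lt_two
          rw [le_div_iff₀ hν']; linarith
      have step2 : ∫ x in Set.Ioi (ν C / ρ), M x ≤ K := by
        apply setIntegral_mono_set hMint
        · filter_upwards [ae_restrict_mem measurableSet_Ioi] with x hx
          have hx0 : 0 < x := hx
          apply mul_nonneg _ (hf0 x)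
          have : 0 ≤ Real.logb 2 (1 + ρ * x) :=
            Real.logb_nonneg one_lt_two (by nlinarith)
          linarith
        · exact HasSubset.Subset.eventuallyLE hsub
      linarith
    have hCK : C ≤ T * K := by
      rw [div_le_iff₀ hT0] at hbound; linarith [hbound]
    have : max 1 (T * K) + 1 ≤ C := hC
    have := le_max_right 1 (T * K)
    linarith
  -- Part 3
  have hνρ : Tendsto (fun C => ν C / ρ) atTop (nhds 0) := by
    have := hνtend.div_const ρ
    simpa using this
  set h : ℝ → ℝ := fun x => Real.logb 2 (1 + ρ * x) * f x with hhdef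
  set I := ∫ x in Set.Ioi (0:ℝ), h x with hIdef
  -- A C → I
  have hA : Tendsto (fun C => ∫ x in Set.Ioi (ν C / ρ), h x) atTop (nhds I) := by
    have hdct : Tendsto
        (fun C => ∫ x in Set.Ioi (0:ℝ), Set.indicator (Set.Ioi (ν C / ρ)) h x)
        atTop (nhds I) := by
      apply tendsto_integral_filter_of_dominated_convergence (fun x => ‖h x‖)
      · filter_upwards with C
        exact hfint.aestronglyMeasurable.indicator measurableSet_Ioi
      · filter_upwards with C
        filter_upwards with x
        exact norm_indicator_le_norm_self h x
      · exact hfint.norm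
      · filter_upwards [ae_restrict_mem measurableSet_Ioi] with x hx
        have hx0 : (0:ℝ) < x := hx
        have hev : ∀ᶠ C in atTop, ν C / ρ < x :=
          (tendsto_order.1 hνρ).2 x hx0
        apply Tendsto.congr' _ (tendsto_const_nhds (x := h x))
        filter_upwards [hev] with C hC
        exact (Set.indicator_of_mem hC h).symm
    apply hdct.congr'
    filter_upwards [eventually_gt_atTop 0] with C hC
    rw [MeasureTheory.setIntegral_indicator measurableSet_Ioi, Set.Ioi_inter_Ioi,
      max_eq_right (le_of_lt (div_pos (hν C hC) hρ))]
  -- B C → 0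
  have hlogν : Tendsto (fun C => Real.logb 2 (1 + ν C)) atTop (nhds 0) := by
    have h1 : Tendsto (fun C => 1 + ν C) atTop (nhds 1) := by
      simpa using tendsto_const_nhds.add hνtend
    have h2 : Tendsto (fun C => Real.log (1 + ν C)) atTop (nhds 0) := by
      have := (Real.continuousAt_log one_ne_zero).tendsto.comp h1
      simpa [Function.comp_def] using this
    have := h2.div_const (Real.log 2)
    simpa [Real.logb] using this
  have hB : Tendsto (fun C => Real.logb 2 (1 + ν C) * ∫ x in Set.Ioi (ν C / ρ), f x)
      atTop (nhds 0) := by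
    apply squeeze_zero_norm' _ (by simpa using hlogν.norm)
    filter_upwards [eventually_gt_atTop 0] with C hC
    have hν' := hν C hC
    have hsub : Set.Ioi (ν C / ρ) ⊆ Set.Ioi (0:ℝ) := Set.Ioi_subset_Ioi (by positivity)
    have h0 : 0 ≤ ∫ x in Set.Ioi (ν C / ρ), f x :=
      setIntegral_nonneg measurableSet_Ioi (fun x _ => hf0 x)
    have h1 : ∫ x in Set.Ioi (ν C / ρ), f x ≤ 1 := by
      rw [← hf1]
      apply setIntegral_mono_set hfInt
      · filter_upwards with x; exact hf0 x
      · exact HasSubset.Subset.eventuallyLE hsub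
    rw [norm_mul]
    calc ‖Real.logb 2 (1 + ν C)‖ * ‖∫ x in Set.Ioi (ν C / ρ), f x‖
        ≤ ‖Real.logb 2 (1 + ν C)‖ * 1 := by
          apply mul_le_mul_of_nonneg_left _ (norm_nonneg _)
          rw [Real.norm_eq_abs, abs_of_nonneg h0]; exact h1
      _ = ‖Real.logb 2 (1 + ν C)‖ := mul_one _
  -- combine
  have hsplit : ∀ᶠ C in atTop,
      T * ∫ x in Set.Ioi (ν C / ρ),
          (Real.logb 2 (1 + ρ * x) - Real.logb 2 (1 + ν C)) * f x =
      T * ((∫ x in Set.Ioi (ν C / ρ), h x) -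
          Real.logb 2 (1 + ν C) * ∫ x in Set.Ioi (ν C / ρ), f x) := by
    filter_upwards [eventually_gt_atTop 0] with C hC
    have hν' := hν C hC
    have hsub : Set.Ioi (ν C / ρ) ⊆ Set.Ioi (0:ℝ) := Set.Ioi_subset_Ioi (by positivity)
    congr 1
    have e1 : ∫ x in Set.Ioi (ν C / ρ),
        (Real.logb 2 (1 + ρ * x) - Real.logb 2 (1 + ν C)) * f x =
        ∫ x in Set.Ioi (ν C / ρ), (h x - Real.logb 2 (1 + ν C) * f x) := by
      apply setIntegral_congr_fun measurableSet_Ioi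
      intro x _; simp [hhdef]; ring
    rw [e1, integral_sub (hfint.mono_set hsub) ((hfInt.mono_set hsub).const_mul _),
      MeasureTheory.integral_const_mul]
  have hfin : Tendsto (fun C =>
      T * ((∫ x in Set.Ioi (ν C / ρ), h x) -
          Real.logb 2 (1 + ν C) * ∫ x in Set.Ioi (ν C / ρ), f x))
      atTop (nhds (T * I)) := by
    have := (hA.sub hB).const_mul T
    simpa using this
  exact ⟨part1, hνtend, (hfin.congr' (hsplit.mono fun C hC => hC.symm))⟩
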